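/- Fix θ0, θ1, θi1, θi2, θi3 ∈ ℂ with 2θ0 + 2θ1 + 2θi1 + θi2 + θi3 = 0, fix t ∈ ℂ∖{0}, and let Q, P be 2×2 complex matrices satisfying the commutation constraint PQ − QP = (θ0 + θ1 + θi1 + θi2)·K, where K := diag(1,−1). Then there exists a function c of ε (independent of Q and P) such that, as ε → 0 with ε ≠ 0, ε·HVIMat(θ0, 1/ε, θ1 − 1/ε, θi1, θi2; 1 + εt; I − εP, (1/ε)Q) − c(ε) converges to HVMat(θ0, θ1, θi1; t; Q, P). (Degeneration of the sixth matrix Painlevé system to the fifth matrix Painlevé system, corresponding to the confluence 22,22,22,211 → (2)(2),22,211.) -/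

import Mathlib

open Filter Topology Matrix

/-- `K = diag(1,−1)`. -/
noncomputable def Kmat : Matrix (Fin 2) (Fin 2) ℂ := Matrix.diagonal ![1, -1]

/-- The matrix Painlevé VI Hamiltonian. -/
noncomputable def HVIMat (θ0 θ1 θt θi1 θi2 t : ℂ) (Q P : Matrix (Fin 2) (Fin 2) ℂ) : ℂ :=
  Matrix.trace (Q * (Q - 1) * (Q - t • (1 : Matrix (Fin 2) (Fin 2) ℂ)) * P ^ 2
      + (((θ0 + 1) • (1 : Matrix (Fin 2) (Fin 2) ℂ)
            - ((θ0 + θ1 + θt) + θi1 + θi2) • Kmat) * (Q * (Q - 1)) * P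
          + θt • ((Q - 1) * (Q - t • (1 : Matrix (Fin 2) (Fin 2) ℂ)) * P)
          + ((θ0 + θ1 + θt) + 2 * θi1 - 1) •
              (Q * (Q - t • (1 : Matrix (Fin 2) (Fin 2) ℂ)) * P))
      + (((θ0 + θ1 + θt) + θi1) * (θ0 + θt + θi1)) • Q) / (t * (t - 1))

/-- The matrix Painlevé V Hamiltonian. -/
noncomputable def HVMat (θ0 θ1 θi1 t : ℂ) (Q P : Matrix (Fin 2) (Fin 2) ℂ) : ℂ :=
  Matrix.trace (P * (P + t • (1 : Matrix (Fin 2) (Fin 2) ℂ)) * Q * (Q - 1)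
      + (θ0 + θ1 + θi1) • P
      - ((θ0 + θ1 + 2 * θi1 - 1) * t) • Q
      - (2 * θ0 + θ1 + 2 * θi1) • (P * Q)) / t

set_option maxHeartbeats 2000000 in
set_option maxRecDepth 100000 in
/-- Degeneration of the sixth matrix Painlevé system to the fifth matrix Painlevé system
(confluence 22,22,22,211 → (2)(2),22,211). -/
theorem stmt19 (θ0 θ1 θi1 θi2 θi3 : ℂ)
    (hsum : 2 * θ0 + 2 * θ1 + 2 * θi1 + θi2 + θi3 = 0)
    (t : ℂ) (ht : t ≠ 0) :
    ∃ c : ℂ → ℂ, ∀ Q P : Matrix (Fin 2) (Fin 2) ℂ,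
      P * Q - Q * P = (θ0 + θ1 + θi1 + θi2) • Kmat →
      Tendsto (fun ε : ℂ =>
          ε * HVIMat θ0 (1 / ε) (θ1 - 1 / ε) θi1 θi2 (1 + ε * t)
              ((1 : Matrix (Fin 2) (Fin 2) ℂ) - ε • P) ((1 / ε) • Q)
            - c ε)
        (𝓝[≠] (0 : ℂ))
        (𝓝 (HVMat θ0 θ1 θi1 t Q P)) := by
  refine ⟨fun ε => (2 * (θ0 + θ1 + θi1) ^ 2 + (θ0 + θ1 + θi1 + θi2) ^ 2
      - 2 * (θ0 + θ1 + θi1) / ε) / ((1 + ε * t) * t), ?_⟩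
  intro Q P hQP
  set μ : ℂ := θ0 + θ1 + θi1 + θi2 with hμdef
  -- Key trace identity from the commutation constraint
  have key : μ * Matrix.trace (Kmat * P * Q) = μ ^ 2 := by
    have e1 : Matrix.trace ((P*Q - Q*P) * (P*Q + Q*P)) = 0 := by
      simp [Matrix.trace_fin_two, Matrix.mul_apply, Matrix.sub_apply, Matrix.add_apply,
        Fin.sum_univ_two]
      ring
    have e2 : Matrix.trace ((P*Q - Q*P) * (P*Q - Q*P)) = 2 * μ ^ 2 := by
      rw [hQP]
      simp [Matrix.trace_fin_two, Matrix.mul_apply, Matrix.smul_apply, Fin.sum_univ_two,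
        Kmat, Matrix.diagonal_apply, smul_eq_mul]
      ring
    have hmat : (P*Q - Q*P) * (P*Q) + (P*Q - Q*P) * (P*Q)
        = (P*Q - Q*P) * (P*Q + Q*P) + (P*Q - Q*P) * (P*Q - Q*P) := by noncomm_ring
    have htr := congrArg Matrix.trace hmat
    rw [Matrix.trace_add, Matrix.trace_add, e1, e2] at htr
    have e3 : Matrix.trace ((P*Q - Q*P) * (P*Q)) = μ ^ 2 := by linear_combination htr / 2
    calc μ * Matrix.trace (Kmat * P * Q) = Matrix.trace ((μ • Kmat) * (P * Q)) := by
          rw [Matrix.smul_mul, Matrix.trace_smul, smul_eq_mul, mul_assoc]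
      _ = μ ^ 2 := by rw [← hQP]; exact e3
  set n0 : ℂ := Matrix.trace (P*P*Q*Q) + t * Matrix.trace (P*Q*Q)
      - (θ0+1) * Matrix.trace (P*Q) + μ * Matrix.trace (Kmat*P*Q)
      - Matrix.trace (P*P*Q) - t * Matrix.trace (P*Q)
      - (θ0+θ1+2*θi1-1) * Matrix.trace (P*Q) - (θ0+θ1+2*θi1-1) * t * Matrix.trace Q
      + (θ0+θ1+θi1) * Matrix.trace P - μ^2 with hn0
  set n1 : ℂ := - Matrix.trace (P*P*P*Q*Q) - t * Matrix.trace (P*P*Q*Q)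
      + (θ0+1) * Matrix.trace (P*P*Q) - μ * Matrix.trace (Kmat*P*P*Q)
      + θ1 * (Matrix.trace (P*P*Q) + t * Matrix.trace (P*Q))
      + (θ0+θ1+2*θi1-1) * (Matrix.trace (P*P*Q) + t * Matrix.trace (P*Q))
      - (θ0+θ1+θi1)^2 * Matrix.trace P with hn1
  have hF0 : n0 / t = HVMat θ0 θ1 θi1 t Q P := by
    rw [HVMat, hn0, div_eq_div_iff ht ht]
    have key' := key
    simp only [Matrix.trace_fin_two, Matrix.mul_apply, Fin.sum_univ_two, Matrix.sub_apply,
      Matrix.add_apply, Matrix.smul_apply, Matrix.one_apply, Kmat, Matrix.diagonal_apply,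
      smul_eq_mul, Fin.isValue, Matrix.cons_val_zero, Matrix.cons_val_one, Matrix.head_cons,
      if_true, if_false, one_ne_zero, zero_ne_one, reduceIte] at key' ⊢
    linear_combination t * key'
  have hcont : Tendsto (fun ε : ℂ => (n0 + n1 * ε) / ((1 + ε * t) * t)) (𝓝 0)
      (𝓝 ((n0 + n1 * 0) / ((1 + 0 * t) * t))) := by
    apply ContinuousAt.div (by fun_prop) (by fun_prop)
    simpa using ht
  have hT : Tendsto (fun ε : ℂ => (n0 + n1 * ε) / ((1 + ε * t) * t)) (𝓝[≠] (0:ℂ))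
      (𝓝 (HVMat θ0 θ1 θi1 t Q P)) := by
    have h : Tendsto (fun ε : ℂ => (n0 + n1 * ε) / ((1 + ε * t) * t)) (𝓝[≠] (0:ℂ))
        (𝓝 ((n0 + n1 * 0) / ((1 + 0 * t) * t))) := hcont.mono_left nhdsWithin_le_nhds
    rw [show (n0 + n1 * 0) / ((1 + 0 * t) * t) = n0 / t by ring_nf, hF0] at h
    exact h
  refine hT.congr' ?_
  have hne : ∀ᶠ ε in 𝓝[≠] (0:ℂ), 1 + ε * t ≠ 0 := by
    apply eventually_nhdsWithin_of_eventually_nhds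
    have hc : ContinuousAt (fun ε : ℂ => 1 + ε * t) 0 := by fun_prop
    exact hc.eventually_ne (by simp)
  filter_upwards [hne, self_mem_nhdsWithin] with ε h1 hε
  have hε' : ε ≠ 0 := hε
  show (n0 + n1 * ε) / ((1 + ε * t) * t) = _
  rw [HVIMat]
  have hstep : ∀ X T C : ℂ, X = T - C →
      X / ((1 + ε * t) * t) = ε * (T / ((1 + ε * t) * ((1 + ε * t) - 1))) - C / ((1 + ε * t) * t) := by
    intro X T C h
    rw [show (1+ε*t) - 1 = ε*t by ring, h]
    field_simp
  apply hstep
  rw [hn0, hn1]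
  simp only [Matrix.trace_fin_two, Matrix.mul_apply, Fin.sum_univ_two, Matrix.sub_apply,
    Matrix.add_apply, Matrix.smul_apply, Matrix.one_apply, Kmat, Matrix.diagonal_apply,
    smul_eq_mul, Fin.isValue, Matrix.cons_val_zero, Matrix.cons_val_one, Matrix.head_cons,
    pow_two, one_ne_zero, zero_ne_one, if_false, reduceIte]
  field_simp
  ring
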